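/- Let B be a positive definite n×n complex matrix and x ∈ ℂⁿ a unit vector. Then for every t ∈ [0,1], with R = max{t, 1−t}, one has ⟨Bx, x⟩^{t} ≤ (⟨Bx, x⟩^{1/2} / ⟨B^{1/2}x, x⟩)^{2R} · ⟨B^t x, x⟩. -/

import Mathlib

open Matrix ComplexOrder

/-- Real power of a (Hermitian) matrix via the continuous functional calculus. -/
noncomputable def mrpow {n : ℕ} (A : Matrix (Fin n) (Fin n) ℂ) (t : ℝ) :
    Matrix (Fin n) (Fin n) ℂ :=
  cfc (fun x : ℝ => x ^ t) A

open Finset in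
/-- Quadratic form of `cfc f B` as a weighted sum over eigenvalues. -/
lemma quad_cfc {n : ℕ} {B : Matrix (Fin n) (Fin n) ℂ} (hB : B.IsHermitian)
    (x : Fin n → ℂ) (f : ℝ → ℝ) :
    (star x ⬝ᵥ (cfc f B *ᵥ x)).re =
      ∑ i, ‖(star (hB.eigenvectorUnitary : Matrix (Fin n) (Fin n) ℂ) *ᵥ x) i‖ ^ 2
        * f (hB.eigenvalues i) := by
  set U := (hB.eigenvectorUnitary : Matrix (Fin n) (Fin n) ℂ) with hU
  set y := star U *ᵥ x with hy
  have h1 : star x ᵥ* U = star y := by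
    rw [hy, star_mulVec, star_eq_conjTranspose U, conjTranspose_conjTranspose]
  rw [hB.cfc_eq, Matrix.IsHermitian.cfc, Unitary.conjStarAlgAut_apply, ← hU, ← mulVec_mulVec, ← mulVec_mulVec,
    dotProduct_mulVec, h1, ← hy]
  rw [dotProduct]
  rw [Complex.re_sum]
  refine Finset.sum_congr rfl fun i _ => ?_
  have h2 : (diagonal (RCLike.ofReal ∘ f ∘ hB.eigenvalues) *ᵥ y) i
      = (f (hB.eigenvalues i) : ℂ) * y i := by
    simp [mulVec_diagonal]
  rw [Pi.star_apply, h2]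
  have h3 : star (y i) * ((f (hB.eigenvalues i) : ℂ) * y i)
      = (f (hB.eigenvalues i) : ℂ) * (y i * star (y i)) := by ring
  rw [h3, Complex.star_def, Complex.mul_conj]
  rw [← Complex.ofReal_mul, Complex.ofReal_re, ← Complex.sq_norm]
  ring

lemma sum_key {m : Type*} [Fintype m] (w l : m → ℝ) (hw : ∀ i, 0 ≤ w i)
    (hl : ∀ i, 0 < l i) (hsum : ∑ i, w i = 1)
    (t : ℝ) (ht : t ∈ Set.Icc (0 : ℝ) 1) (R : ℝ) (hR : R = max t (1 - t)) :
    (∑ i, w i * l i) ^ t ≤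
      ((∑ i, w i * l i) ^ (1 / 2 : ℝ) / (∑ i, w i * l i ^ (1 / 2 : ℝ))) ^ (2 * R) *
        (∑ i, w i * l i ^ t) := by
  obtain ⟨ht0, ht1⟩ := ht
  obtain ⟨i0, hi0⟩ : ∃ i, 0 < w i := by
    by_contra h
    push_neg at h
    have : (∑ i, w i) ≤ 0 := Finset.sum_nonpos fun i _ => h i
    linarith
  set A := ∑ i, w i * l i with hA
  set H := ∑ i, w i * l i ^ (1 / 2 : ℝ) with hH
  set T := ∑ i, w i * l i ^ t with hT
  have hApos : 0 < A :=
    Finset.sum_pos' (fun i _ => mul_nonneg (hw i) (hl i).le)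
      ⟨i0, Finset.mem_univ _, mul_pos hi0 (hl i0)⟩
  have hHpos : 0 < H :=
    Finset.sum_pos' (fun i _ => mul_nonneg (hw i) (Real.rpow_nonneg (hl i).le _))
      ⟨i0, Finset.mem_univ _, mul_pos hi0 (Real.rpow_pos_of_pos (hl i0) _)⟩
  have hTpos : 0 < T :=
    Finset.sum_pos' (fun i _ => mul_nonneg (hw i) (Real.rpow_nonneg (hl i).le _))
      ⟨i0, Finset.mem_univ _, mul_pos hi0 (Real.rpow_pos_of_pos (hl i0) _)⟩
  have hrhs : (A ^ (1 / 2 : ℝ) / H) ^ (2 * R) = A ^ R / H ^ (2 * R) := by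
    rw [Real.div_rpow (Real.rpow_nonneg hApos.le _) hHpos.le]
    congr 1
    rw [← Real.rpow_mul hApos.le, show (1 / 2 : ℝ) * (2 * R) = R from by ring]
  rw [hrhs, div_mul_eq_mul_div, le_div_iff₀ (by positivity)]
  rcases le_or_gt (1 / 2 : ℝ) t with hhalf | hhalf
  · have hRt : R = t := by rw [hR, max_eq_left (by linarith)]
    rw [hRt]
    have key : H ^ (2 * t) ≤ T := by
      have h1 : T = ∑ i, w i * (l i ^ (1 / 2 : ℝ)) ^ (2 * t) := by
        refine Finset.sum_congr rfl fun i _ => ?_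
        rw [← Real.rpow_mul (hl i).le, show (1 / 2 : ℝ) * (2 * t) = t from by ring]
      rw [h1, hH]
      exact Real.rpow_arith_mean_le_arith_mean_rpow Finset.univ w (fun i => l i ^ (1 / 2 : ℝ))
        (fun i _ => hw i) hsum (fun i _ => Real.rpow_nonneg (hl i).le _) (by linarith)
    exact mul_le_mul_of_nonneg_left key (Real.rpow_nonneg hApos.le _)
  · have hRt : R = 1 - t := by rw [hR, max_eq_right (by linarith)]
    rw [hRt]
    set p : ℝ := 2 * (1 - t) with hp
    set q : ℝ := 2 * (1 - t) / (1 - 2 * t) with hq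
    have h2t : 0 < 1 - 2 * t := by linarith
    have h1t : 0 < 1 - t := by linarith
    have hp1 : 1 < p := by rw [hp]; linarith
    have hp0 : 0 < p := by linarith
    have hq0 : 0 < q := by rw [hq]; positivity
    have hpq : p.HolderConjugate q := by
      refine Real.holderConjugate_iff.mpr ⟨hp1, ?_⟩
      rw [hp, hq]
      field_simp
      ring
    have hsum1 : 1 / p + 1 / q = 1 := by simpa [one_div] using hpq.inv_add_inv_eq_one
    have hexp : t * (1 / p) + 1 / q = 1 / 2 := by
      rw [hp, hq]
      field_simp
      ring
    have hold := Real.inner_le_Lp_mul_Lq Finset.univ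
      (fun i => (w i * l i ^ t) ^ (1 / p)) (fun i => (w i * l i) ^ (1 / q)) hpq
    have hlhs : ∑ i, (w i * l i ^ t) ^ (1 / p) * (w i * l i) ^ (1 / q) = H := by
      refine Finset.sum_congr rfl fun i _ => ?_
      rw [Real.mul_rpow (hw i) (Real.rpow_nonneg (hl i).le _),
        Real.mul_rpow (hw i) (hl i).le, ← Real.rpow_mul (hl i).le]
      have e1 : w i ^ (1 / p) * l i ^ (t * (1 / p)) * (w i ^ (1 / q) * l i ^ (1 / q))
          = (w i ^ (1 / p) * w i ^ (1 / q)) * (l i ^ (t * (1 / p)) * l i ^ (1 / q)) := by ring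
      rw [e1, ← Real.rpow_add' (hw i) (by rw [hsum1]; norm_num), hsum1, Real.rpow_one,
        ← Real.rpow_add (hl i), hexp]
    have hTeq : ∑ i, |(w i * l i ^ t) ^ (1 / p)| ^ p = T := by
      refine Finset.sum_congr rfl fun i _ => ?_
      rw [abs_of_nonneg (Real.rpow_nonneg (mul_nonneg (hw i) (Real.rpow_nonneg (hl i).le _)) _),
        ← Real.rpow_mul (mul_nonneg (hw i) (Real.rpow_nonneg (hl i).le _)),
        one_div_mul_cancel hp0.ne', Real.rpow_one]
    have hAeq : ∑ i, |(w i * l i) ^ (1 / q)| ^ q = A := by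
      refine Finset.sum_congr rfl fun i _ => ?_
      rw [abs_of_nonneg (Real.rpow_nonneg (mul_nonneg (hw i) (hl i).le) _),
        ← Real.rpow_mul (mul_nonneg (hw i) (hl i).le),
        one_div_mul_cancel hq0.ne', Real.rpow_one]
    rw [hlhs, hTeq, hAeq] at hold
    have hHp : H ^ p ≤ T * A ^ (1 - 2 * t) := by
      have h1 := Real.rpow_le_rpow hHpos.le hold hp0.le
      rw [Real.mul_rpow (Real.rpow_nonneg hTpos.le _) (Real.rpow_nonneg hApos.le _),
        ← Real.rpow_mul hTpos.le, ← Real.rpow_mul hApos.le,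
        one_div_mul_cancel hp0.ne', Real.rpow_one] at h1
      have e3 : 1 / q * p = 1 - 2 * t := by
        rw [hp, hq]
        field_simp
      rwa [e3] at h1
    calc A ^ t * H ^ p ≤ A ^ t * (T * A ^ (1 - 2 * t)) :=
          mul_le_mul_of_nonneg_left hHp (Real.rpow_nonneg hApos.le _)
      _ = A ^ t * A ^ (1 - 2 * t) * T := by ring
      _ = A ^ (1 - t) * T := by
          rw [← Real.rpow_add hApos, show t + (1 - 2 * t) = 1 - t by ring]

/-- For a positive definite `B`, a unit vector `x`, `t ∈ [0,1]` and
`R = max {t, 1-t}`: `⟨Bx, x⟩ᵗ ≤ (⟨Bx, x⟩^{1/2} / ⟨B^{1/2}x, x⟩)^{2R} ⟨Bᵗx, x⟩`. -/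
theorem stmt5 (n : ℕ) (B : Matrix (Fin n) (Fin n) ℂ) (hB : B.PosDef)
    (x : Fin n → ℂ) (hx : star x ⬝ᵥ x = 1)
    (t : ℝ) (ht : t ∈ Set.Icc (0 : ℝ) 1) (R : ℝ) (hR : R = max t (1 - t)) :
    (star x ⬝ᵥ (B *ᵥ x)).re ^ t ≤
      ((star x ⬝ᵥ (B *ᵥ x)).re ^ (1 / 2 : ℝ) / (star x ⬝ᵥ (mrpow B (1 / 2) *ᵥ x)).re) ^ (2 * R) *
        (star x ⬝ᵥ (mrpow B t *ᵥ x)).re := by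
  have hH : B.IsHermitian := hB.1
  set w : Fin n → ℝ :=
    fun i => ‖(star (hH.eigenvectorUnitary : Matrix (Fin n) (Fin n) ℂ) *ᵥ x) i‖ ^ 2 with hwdef
  set l : Fin n → ℝ := hH.eigenvalues with hldef
  have hw : ∀ i, 0 ≤ w i := fun i => by positivity
  have hl : ∀ i, 0 < l i := fun i => hB.eigenvalues_pos i
  have hsum : ∑ i, w i = 1 := by
    have h1 := quad_cfc hH x (fun _ : ℝ => (1 : ℝ))
    rw [cfc_const_one ℝ B hH.isSelfAdjoint, one_mulVec, hx] at h1
    simpa using h1.symm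
  have hBx : (star x ⬝ᵥ (B *ᵥ x)).re = ∑ i, w i * l i := by
    have h1 := quad_cfc hH x (fun r : ℝ => r)
    rwa [cfc_id' ℝ B hH.isSelfAdjoint] at h1
  have hBt : (star x ⬝ᵥ (mrpow B t *ᵥ x)).re = ∑ i, w i * l i ^ t :=
    quad_cfc hH x (fun r : ℝ => r ^ t)
  have hBh : (star x ⬝ᵥ (mrpow B (1 / 2) *ᵥ x)).re = ∑ i, w i * l i ^ (1 / 2 : ℝ) :=
    quad_cfc hH x (fun r : ℝ => r ^ (1 / 2 : ℝ))
  rw [hBx, hBt, hBh]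
  exact sum_key w l hw hl hsum t ht R hR
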